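/- Let A be an m × k integer matrix of rank r and b an integer column vector such that the augmented matrix (A|b) has rank r+1 over ℚ (equivalently, Az = b has no rational solution). If p is a prime such that Az ≡ b (mod p) has a solution, then some (r+1)×(r+1) minor D of (A|b) that is nonzero over ℚ vanishes modulo p. -/

import Mathlib

open Matrix Submodule Module

/-- From `s ≤ rank M`, select `s` injective column indices with independent columns. -/
lemma aux_cols {F : Type*} [Field F] {m n s : ℕ} (M : Matrix (Fin m) (Fin n) F)
    (h : s ≤ M.rank) :
    ∃ c : Fin s → Fin n, Function.Injective c ∧
      LinearIndependent F (fun j : Fin s => Mᵀ (c j)) := by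
  classical
  obtain ⟨t, hts, hspan, hli⟩ := exists_linearIndependent F (Set.range Mᵀ)
  have htfin : t.Finite := (Set.finite_range Mᵀ).subset hts
  haveI : Fintype t := htfin.fintype
  have hcard : s ≤ t.toFinset.card := by
    have h1 : finrank F (span F t) = t.toFinset.card := by
      rw [finrank_span_set_eq_card hli, Set.toFinset_card]
    have h2 : M.rank = finrank F (span F t) := by
      rw [M.rank_eq_finrank_span_cols, hspan]; rfl
    omega
  -- choose s distinct elements of t
  let e := t.toFinset.equivFin
  let f : Fin s → t.toFinset := fun j => e.symm (Fin.castLE hcard j)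
  have hfinj : Function.Injective f := fun a b hab => by
    have := e.symm.injective hab
    exact Fin.castLE_injective hcard this
  have hmem : ∀ j, (f j : Fin m → F) ∈ Set.range Mᵀ := fun j =>
    hts (Set.mem_toFinset.mp (f j).2)
  choose c hc using fun j => hmem j
  refine ⟨c, ?_, ?_⟩
  · intro a b hab
    apply hfinj
    apply Subtype.ext
    rw [← hc a, ← hc b, hab]
  · have : (fun j : Fin s => Mᵀ (c j)) =
        ((↑) : t → Fin m → F) ∘ (fun j => ⟨(f j : Fin m → F), Set.mem_toFinset.mp (f j).2⟩) := by
      funext j; simp [hc j]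
    rw [this]
    refine hli.comp _ (fun a b hab => ?_)
    have h2 := congrArg Subtype.val hab
    exact hfinj (Subtype.ext h2)

/-- From `s ≤ rank M`, get an `s × s` submatrix with nonzero determinant. -/
lemma aux_exists_minor {F : Type*} [Field F] {m n s : ℕ} (M : Matrix (Fin m) (Fin n) F)
    (h : s ≤ M.rank) :
    ∃ (rows : Fin s → Fin m) (cols : Fin s → Fin n),
      Function.Injective rows ∧ Function.Injective cols ∧
      (M.submatrix rows cols).det ≠ 0 := by
  obtain ⟨c, hcinj, hli⟩ := aux_cols M h
  set N : Matrix (Fin m) (Fin s) F := M.submatrix id c with hN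
  have hNt : Nᵀ = fun j : Fin s => Mᵀ (c j) := by
    funext j i; rfl
  have hrank : s ≤ Nᵀ.rank := by
    have : Nᵀ.rank = Fintype.card (Fin s) := by
      apply LinearIndependent.rank_matrix
      rw [hNt]; exact hli
    rw [this, Fintype.card_fin]
  obtain ⟨rws, hrinj, hli2⟩ := aux_cols Nᵀ hrank
  refine ⟨rws, c, hrinj, hcinj, ?_⟩
  have hrows : LinearIndependent F (fun i : Fin s => (M.submatrix rws c) i) := by
    have : (fun i : Fin s => (M.submatrix rws c) i) = fun i => Nᵀᵀ (rws i) := by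
      funext i j; rfl
    rw [this]; exact hli2
  have hu : IsUnit (M.submatrix rws c) := Matrix.linearIndependent_rows_iff_isUnit.mp hrows
  exact ((Matrix.isUnit_iff_isUnit_det _).mp hu).ne_zero

/-- A nonzero `s × s` minor forces `s ≤ rank`. -/
lemma aux_rank_ge {F : Type*} [Field F] {m n s : ℕ} (M : Matrix (Fin m) (Fin n) F)
    (rows : Fin s → Fin m) (cols : Fin s → Fin n)
    (hdet : (M.submatrix rows cols).det ≠ 0) : s ≤ M.rank := by
  classical
  have h1 : M.submatrix rows cols =
      ((1 : Matrix (Fin m) (Fin m) F).submatrix rows (Equiv.refl (Fin m))) *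
        (M * (1 : Matrix (Fin n) (Fin n) F).submatrix (Equiv.refl (Fin n)) cols) := by
    rw [Matrix.mul_submatrix_one, Matrix.one_submatrix_mul]
    simp
  have hu : IsUnit (M.submatrix rows cols) :=
    (Matrix.isUnit_iff_isUnit_det _).mpr (isUnit_iff_ne_zero.mpr hdet)
  have hr : (M.submatrix rows cols).rank = s := by
    rw [Matrix.rank_of_isUnit _ hu, Fintype.card_fin]
  calc s = (M.submatrix rows cols).rank := hr.symm
    _ ≤ (M * (1 : Matrix (Fin n) (Fin n) F).submatrix (Equiv.refl (Fin n)) cols).rank := by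
        rw [h1]; exact Matrix.rank_mul_le_right _ _
    _ ≤ M.rank := Matrix.rank_mul_le_left _ _

lemma det_map_int {S : Type*} [CommRing S] {n : ℕ} (X : Matrix (Fin n) (Fin n) ℤ) :
    (X.map (Int.cast : ℤ → S)).det = ((X.det : ℤ) : S) :=
  (RingHom.map_det (Int.castRingHom S) X).symm

theorem minor_vanishes_mod_p
    (m k r : ℕ) (A : Matrix (Fin m) (Fin k) ℤ) (b : Fin m → ℤ)
    (Aug : Matrix (Fin m) (Fin (k + 1)) ℤ)
    (hAug : Aug = Matrix.of fun i (j : Fin (k + 1)) =>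
      if h : (j : ℕ) < k then A i ⟨j, h⟩ else b i)
    (hA : (A.map (Int.cast : ℤ → ℚ)).rank = r)
    (hAugRank : (Aug.map (Int.cast : ℤ → ℚ)).rank = r + 1)
    (p : ℕ) (hp : p.Prime)
    (hsol : ∃ z : Fin k → ZMod p,
      (A.map (Int.cast : ℤ → ZMod p)).mulVec z = fun i => ((b i : ZMod p))) :
    ∃ (rows : Fin (r + 1) → Fin m) (cols : Fin (r + 1) → Fin (k + 1)),
      Function.Injective rows ∧ Function.Injective cols ∧
      (Aug.submatrix rows cols).det ≠ 0 ∧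
      (p : ℤ) ∣ (Aug.submatrix rows cols).det := by
  classical
  haveI : Fact p.Prime := ⟨hp⟩
  obtain ⟨z, hz⟩ := hsol
  -- Step 1: a nonzero minor over ℚ
  obtain ⟨rows, cols, hrinj, hcinj, hdetQ⟩ :=
    aux_exists_minor (Aug.map (Int.cast : ℤ → ℚ)) (le_of_eq hAugRank.symm)
  have hmapQ : (Aug.map (Int.cast : ℤ → ℚ)).submatrix rows cols
      = (Aug.submatrix rows cols).map (Int.cast : ℤ → ℚ) := by
    rw [Matrix.submatrix_map]
  have hdetZ : (Aug.submatrix rows cols).det ≠ 0 := by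
    intro h0
    apply hdetQ
    rw [hmapQ, det_map_int, h0, Int.cast_zero]
  refine ⟨rows, cols, hrinj, hcinj, hdetZ, ?_⟩
  -- Step 2: rank of A mod p is at most r
  set Ap : Matrix (Fin m) (Fin k) (ZMod p) := A.map (Int.cast : ℤ → ZMod p) with hAp
  set Augp : Matrix (Fin m) (Fin (k + 1)) (ZMod p) := Aug.map (Int.cast : ℤ → ZMod p) with hAugp
  have hApRank : Ap.rank ≤ r := by
    by_contra hlt
    push_neg at hlt
    obtain ⟨rw', cw', _, _, hd⟩ := aux_exists_minor Ap hlt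
    -- lift to ℚ: the corresponding integer minor is nonzero
    have hdz : (A.submatrix rw' cw').det ≠ 0 := by
      intro h0
      apply hd
      rw [hAp, Matrix.submatrix_map, det_map_int, h0, Int.cast_zero]
    have hdq : ((A.map (Int.cast : ℤ → ℚ)).submatrix rw' cw').det ≠ 0 := by
      rw [Matrix.submatrix_map, det_map_int]
      exact_mod_cast hdz
    have := aux_rank_ge (A.map (Int.cast : ℤ → ℚ)) rw' cw' hdq
    omega
  -- Step 3: rank of Aug mod p ≤ rank of A mod p
  have hcolspan : Submodule.span (ZMod p) (Set.range Augpᵀ)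
      ≤ Submodule.span (ZMod p) (Set.range Apᵀ) := by
    rw [Submodule.span_le]
    rintro _ ⟨j, rfl⟩
    by_cases hj : (j : ℕ) < k
    · have : Augpᵀ j = Apᵀ ⟨j, hj⟩ := by
        funext i
        simp [hAugp, hAp, hAug, Matrix.transpose_apply, Matrix.map_apply, hj]
      rw [this]
      exact Submodule.subset_span ⟨_, rfl⟩
    · have hb : Augpᵀ j = fun i => ((b i : ZMod p)) := by
        funext i
        simp [hAugp, hAug, Matrix.transpose_apply, Matrix.map_apply, hj]
      have hsum : (fun i => ((b i : ZMod p))) = ∑ l : Fin k, z l • Apᵀ l := by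
        rw [← hz]
        funext i
        simp only [Matrix.mulVec, dotProduct, Finset.sum_apply, Pi.smul_apply,
          Matrix.transpose_apply, smul_eq_mul]
        exact Finset.sum_congr rfl fun l _ => mul_comm _ _
      rw [hb, hsum]
      exact Submodule.sum_mem _ fun l _ =>
        Submodule.smul_mem _ _ (Submodule.subset_span ⟨l, rfl⟩)
  have hAugpRank : Augp.rank ≤ r := by
    calc Augp.rank = Module.finrank (ZMod p) (Submodule.span (ZMod p) (Set.range Augpᵀ)) :=
          Augp.rank_eq_finrank_span_cols
      _ ≤ Module.finrank (ZMod p) (Submodule.span (ZMod p) (Set.range Apᵀ)) :=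
          Submodule.finrank_mono hcolspan
      _ = Ap.rank := Ap.rank_eq_finrank_span_cols.symm
      _ ≤ r := hApRank
  -- Step 4: the chosen minor vanishes mod p
  rw [← ZMod.intCast_zmod_eq_zero_iff_dvd]
  by_contra h0
  have hdp : ((Augp.submatrix rows cols).det : ZMod p) ≠ 0 := by
    rw [hAugp, Matrix.submatrix_map, det_map_int]
    exact h0
  have := aux_rank_ge Augp rows cols hdp
  omega
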